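/- Fix λ, μ > 0 and w > 0. For λᵢ ∈ (0, λ], define D(λᵢ) = √((λ+μ)² − 4λᵢμ), a = (−(λ+μ)+D)/2, b = (−(λ+μ)−D)/2, and P(λᵢ) := (a e^{bw} − b e^{aw})/(a − b). Then P is strictly decreasing in λᵢ on the interval where D > 0. -/

import Mathlib

open Real Set

lemma sinh_lt_mul_cosh {x : ℝ} (hx : 0 < x) : Real.sinh x < x * Real.cosh x := by
  have h : StrictMonoOn (fun t => t * Real.cosh t - Real.sinh t) (Ici 0) := by
    apply strictMonoOn_of_deriv_pos (convex_Ici 0)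
    · fun_prop
    · intro t ht
      rw [interior_Ici] at ht
      have h1 : HasDerivAt (fun t : ℝ => t * Real.cosh t - Real.sinh t)
          (1 * Real.cosh t + t * Real.sinh t - Real.cosh t) t :=
        ((hasDerivAt_id t).mul (Real.hasDerivAt_cosh t)).sub (Real.hasDerivAt_sinh t)
      rw [h1.deriv]
      have ht2 : 0 < t := ht
      have := Real.sinh_pos_iff.mpr ht2
      nlinarith
  have := h (self_mem_Ici) (le_of_lt hx : (0:ℝ) ≤ x) hx
  simpa using this

lemma F_mono (s w : ℝ) (hs : 0 < s) (hw : 0 < w) :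
    StrictMonoOn (fun d => Real.cosh (d * w / 2) + s * (Real.sinh (d * w / 2) / d))
      (Ioi 0) := by
  apply strictMonoOn_of_deriv_pos (convex_Ioi 0)
  · apply ContinuousOn.add
    · fun_prop
    · apply ContinuousOn.mul continuousOn_const
      apply ContinuousOn.div (by fun_prop) continuousOn_id
      intro x hx; exact ne_of_gt hx
  · intro d hd
    rw [interior_Ioi] at hd
    have hdp : 0 < d := hd
    have hd0 : d ≠ 0 := ne_of_gt hdp
    have h1 : HasDerivAt (fun d : ℝ => Real.cosh (d * w / 2))
        (Real.sinh (d * w / 2) * (w / 2)) d := by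
      simpa [Function.comp_def] using (Real.hasDerivAt_cosh (d * w / 2)).comp d
        (((hasDerivAt_id d).mul_const w).div_const 2)
    have h2 : HasDerivAt (fun d : ℝ => Real.sinh (d * w / 2) / d)
        ((Real.cosh (d * w / 2) * (w / 2) * d - Real.sinh (d * w / 2) * 1) / d ^ 2) d := by
      apply HasDerivAt.div _ (hasDerivAt_id d) hd0
      simpa [Function.comp_def] using (Real.hasDerivAt_sinh (d * w / 2)).comp d
        (((hasDerivAt_id d).mul_const w).div_const 2)
    have h3 := h1.fun_add ((h2.const_mul s))
    rw [h3.deriv]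
    have hx : 0 < d * w / 2 := by positivity
    have hsl := sinh_lt_mul_cosh hx
    have hsp := Real.sinh_pos_iff.mpr hx
    have hd2 : 0 < d ^ 2 := by positivity
    have : 0 < Real.cosh (d * w / 2) * (w / 2) * d - Real.sinh (d * w / 2) * 1 := by
      nlinarith
    positivity

noncomputable def PA (lam mu w li : ℝ) : ℝ :=
  let D := Real.sqrt ((lam + mu)^2 - 4 * li * mu)
  let a := (-(lam + mu) + D)/2
  let b := (-(lam + mu) - D)/2
  (a * Real.exp (b * w) - b * Real.exp (a * w)) / (a - b)

lemma PA_eq (lam mu w li : ℝ) (h : 0 < (lam + mu)^2 - 4 * li * mu) :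
    PA lam mu w li = Real.exp (-((lam + mu) * w) / 2) *
      (Real.cosh (Real.sqrt ((lam + mu)^2 - 4 * li * mu) * w / 2) +
        (lam + mu) * (Real.sinh (Real.sqrt ((lam + mu)^2 - 4 * li * mu) * w / 2) /
          Real.sqrt ((lam + mu)^2 - 4 * li * mu))) := by
  have hd : 0 < Real.sqrt ((lam + mu)^2 - 4 * li * mu) := Real.sqrt_pos.mpr h
  unfold PA
  simp only []
  set d := Real.sqrt ((lam + mu)^2 - 4 * li * mu) with hdd
  have e1 : (-(lam + mu) - d)/2 * w = (-((lam + mu) * w) / 2) + (-(d * w / 2)) := by ring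
  have e2 : (-(lam + mu) + d)/2 * w = (-((lam + mu) * w) / 2) + (d * w / 2) := by ring
  rw [e1, e2, Real.exp_add, Real.exp_add, Real.cosh_eq, Real.sinh_eq]
  have hdenom : (-(lam + mu) + d)/2 - (-(lam + mu) - d)/2 = d := by ring
  rw [hdenom]
  field_simp
  ring

theorem PA_strictAnti (lam mu w : ℝ) (hlam : 0 < lam) (hmu : 0 < mu) (hw : 0 < w) :
    StrictAntiOn (PA lam mu w)
      {li | li ∈ Set.Ioc 0 lam ∧ 4 * li * mu < (lam + mu)^2} := by
  intro x hx y hy hxy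
  obtain ⟨⟨hx0, hxl⟩, hxD⟩ := hx
  obtain ⟨⟨hy0, hyl⟩, hyD⟩ := hy
  have hX : 0 < (lam + mu)^2 - 4 * x * mu := by linarith
  have hY : 0 < (lam + mu)^2 - 4 * y * mu := by linarith
  have hdy : 0 < Real.sqrt ((lam + mu)^2 - 4 * y * mu) := Real.sqrt_pos.mpr hY
  have hdx : 0 < Real.sqrt ((lam + mu)^2 - 4 * x * mu) := Real.sqrt_pos.mpr hX
  have hlt : Real.sqrt ((lam + mu)^2 - 4 * y * mu) < Real.sqrt ((lam + mu)^2 - 4 * x * mu) :=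
    Real.sqrt_lt_sqrt (le_of_lt hY) (by nlinarith)
  rw [PA_eq lam mu w x hX, PA_eq lam mu w y hY]
  exact mul_lt_mul_of_pos_left (F_mono (lam + mu) w (by positivity) hw (Set.mem_Ioi.mpr hdy) (Set.mem_Ioi.mpr hdx) hlt) (Real.exp_pos _)
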